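/- Let λ ≥ 1 and r² = λ²/16 + 5/32 + 9/(256λ²). Then three closed disks, each of radius r, can be placed to cover a closed λ×1 rectangle: the first covering a vertical strip of width S₁ = sqrt(4r² - 1), and the remaining two each covering half (a (λ−S₁)×(1/2) sub-rectangle) of the remaining (λ−S₁)×1 rectangle. -/

import Mathlib

/-- The closed axis-aligned rectangle [a,b] × [c,d] in the Euclidean plane. -/
def box (a b c d : ℝ) : Set (EuclideanSpace ℝ (Fin 2)) :=
  {p | p 0 ∈ Set.Icc a b ∧ p 1 ∈ Set.Icc c d}

lemma box_subset_ball (a b c d r : ℝ) (hr : 0 ≤ r)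
    (h : (b - a) ^ 2 + (d - c) ^ 2 ≤ 4 * r ^ 2) :
    box a b c d ⊆ Metric.closedBall ((!₂[(a + b) / 2, (c + d) / 2] : EuclideanSpace ℝ (Fin 2))) r := by
  rintro p ⟨⟨h1, h2⟩, h3, h4⟩
  rw [Metric.mem_closedBall, EuclideanSpace.dist_eq]
  rw [show r = Real.sqrt (r ^ 2) from (Real.sqrt_sq hr).symm]
  apply Real.sqrt_le_sqrt
  rw [Fin.sum_univ_two]
  simp only [WithLp.ofLp_toLp, Matrix.cons_val_zero, Matrix.cons_val_one, Matrix.head_cons]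
  rw [Real.dist_eq, Real.dist_eq, sq_abs, sq_abs]
  nlinarith [mul_nonneg (by linarith : (0:ℝ) ≤ p 0 - a) (by linarith : (0:ℝ) ≤ b - p 0),
    mul_nonneg (by linarith : (0:ℝ) ≤ p 1 - c) (by linarith : (0:ℝ) ≤ d - p 1)]

/-- For λ ≥ 1 and r² = λ²/16 + 5/32 + 9/(256λ²), three disks of radius r can
cover the λ×1 rectangle: the first a vertical strip of width S₁ = √(4r²−1),
the other two each half of the remaining (λ−S₁)×1 rectangle. -/
theorem stmt_5 (lam r : ℝ) (hlam : 1 ≤ lam) (hr0 : 0 ≤ r)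
    (hr : r ^ 2 = lam ^ 2 / 16 + 5 / 32 + 9 / (256 * lam ^ 2)) :
    ∃ c₁ c₂ c₃ : EuclideanSpace ℝ (Fin 2),
      box 0 (Real.sqrt (4 * r ^ 2 - 1)) 0 1 ⊆ Metric.closedBall c₁ r ∧
      box (Real.sqrt (4 * r ^ 2 - 1)) lam 0 (1 / 2) ⊆ Metric.closedBall c₂ r ∧
      box (Real.sqrt (4 * r ^ 2 - 1)) lam (1 / 2) 1 ⊆ Metric.closedBall c₃ r ∧
      box 0 lam 0 1 ⊆
        Metric.closedBall c₁ r ∪ Metric.closedBall c₂ r ∪ Metric.closedBall c₃ r := by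
  have hl0 : (0:ℝ) < lam := by linarith
  have hl2 : (0:ℝ) < lam ^ 2 := by positivity
  have key : 256 * lam ^ 2 * r ^ 2 = 16 * lam ^ 4 + 40 * lam ^ 2 + 9 := by
    field_simp at hr; nlinarith [hr]
  have hSnum : (0:ℝ) ≤ (4 * lam ^ 2 - 3) / (8 * lam) := by
    apply div_nonneg (by nlinarith) (by linarith)
  have hSval : Real.sqrt (4 * r ^ 2 - 1) = (4 * lam ^ 2 - 3) / (8 * lam) := by
    rw [show 4 * r ^ 2 - 1 = ((4 * lam ^ 2 - 3) / (8 * lam)) ^ 2 by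
      field_simp; nlinarith [key]]
    exact Real.sqrt_sq hSnum
  set S : ℝ := Real.sqrt (4 * r ^ 2 - 1) with hS
  have hS2 : S ^ 2 = 4 * r ^ 2 - 1 := by
    rw [hSval]; field_simp; nlinarith [key]
  have h2lS : 2 * lam * S = lam ^ 2 - 3 / 4 := by
    rw [hSval]; field_simp; ring
  have hb1 := box_subset_ball 0 S 0 1 r hr0 (by nlinarith [hS2])
  have hb2 := box_subset_ball S lam 0 (1/2) r hr0 (by nlinarith [hS2, h2lS])
  have hb3 := box_subset_ball S lam (1/2) 1 r hr0 (by nlinarith [hS2, h2lS])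
  refine ⟨!₂[(0 + S) / 2, (0 + 1) / 2], !₂[(S + lam) / 2, (0 + 1/2) / 2],
    !₂[(S + lam) / 2, (1/2 + 1) / 2], hb1, hb2, hb3, ?_⟩
  rintro p ⟨⟨h1, h2⟩, h3, h4⟩
  rcases le_total (p 0) S with hp | hp
  · exact Or.inl (Or.inl (hb1 ⟨⟨h1, hp⟩, h3, h4⟩))
  · rcases le_total (p 1) (1/2) with hq | hq
    · exact Or.inl (Or.inr (hb2 ⟨⟨hp, h2⟩, h3, hq⟩))
    · exact Or.inr (hb3 ⟨⟨hp, h2⟩, hq, h4⟩)
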